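/- If two reduced words i, i' ∈ R(u,v) are related by a 2- or 3-move, then the linear maps φ±_{i',i} satisfy φ⁻_{i,i'} ∘ φ⁺_{i',i} = Id and φ⁺_{i,i'} ∘ φ⁻_{i',i} = Id. -/

import Mathlib

open scoped Classical

namespace SLC

variable {V : Type*} [DecidableEq V]

/-- The simply-laced Coxeter matrix associated with a simple graph `P`:
`M i i = 1`, `M i j = 3` if `i` and `j` are adjacent, and `M i j = 2` otherwise. -/
noncomputable def coxeterMatrix (P : SimpleGraph V) : CoxeterMatrix V where
  M := fun i j => if i = j then 1 else if P.Adj i j then 3 else 2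
  isSymm := by
    ext i j
    show (if j = i then 1 else if P.Adj j i then 3 else 2) = (if i = j then 1 else if P.Adj i j then 3 else 2)
    by_cases h : i = j
    · subst h; rfl
    · rw [if_neg (Ne.symm h), if_neg h]
      by_cases ha : P.Adj i j
      · rw [if_pos (P.adj_symm ha), if_pos ha]
      · rw [if_neg (fun hc => ha (P.adj_symm hc)), if_neg ha]
  diagonal := by intro i; simp
  off_diagonal := by
    intro i i' h
    show (if i = i' then 1 else if P.Adj i i' then 3 else 2) ≠ 1
    rw [if_neg h]
    split <;> omega

/-- `e` is a reduced word for the pair `(u, v)`: the subword of entries with negative sign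
(first component `false`), with signs forgotten, is a reduced word for `u`, and the subword of
entries with positive sign is a reduced word for `v`. -/
def IsRWordPair {W : Type*} [Group W] (P : SimpleGraph V)
    (cs : CoxeterSystem (coxeterMatrix P) W) (u v : W) {m : ℕ}
    (e : Fin m → Bool × V) : Prop :=
  cs.wordProd (((List.ofFn e).filter fun p => !p.1).map Prod.snd) = u ∧
    (((List.ofFn e).filter fun p => !p.1).map Prod.snd).length = cs.length u ∧
    cs.wordProd (((List.ofFn e).filter fun p => p.1).map Prod.snd) = v ∧
    (((List.ofFn e).filter fun p => p.1).map Prod.snd).length = cs.length v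

/-- `k = l⁻`: `k` is the largest index smaller than `l` carrying the same letter of `P`. -/
def IsPred {m : ℕ} (e : Fin m → Bool × V) (k l : Fin m) : Prop :=
  k < l ∧ (e k).2 = (e l).2 ∧ ∀ j, k < j → j < l → (e j).2 ≠ (e l).2

/-- The index `l` is `e`-bounded: `l⁻ > 0`, i.e. `l` has a predecessor. -/
def BoundedIdx {m : ℕ} (e : Fin m → Bool × V) (l : Fin m) : Prop :=
  ∃ k, IsPred e k l

/-- Conditions (ii) and (iii) of Definition 3.1 (inclined edges), for `k < l`. -/
def InclCond {m : ℕ} (P : SimpleGraph V) (e : Fin m → Bool × V) (k l : Fin m) : Prop :=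
  k < l ∧ P.Adj (e k).2 (e l).2 ∧
    ((∃ p, IsPred e p l ∧ p < k ∧ (∀ q, IsPred e q k → q < p) ∧ (e p).1 = (e k).1) ∨
     (∃ q, IsPred e q k ∧ (∀ p, IsPred e p l → p < q) ∧ (e q).1 = !(e k).1))

/-- `a → b` is a directed edge of the graph `Σ(e)`. -/
def DirEdge {m : ℕ} (P : SimpleGraph V) (e : Fin m → Bool × V) (a b : Fin m) : Prop :=
  (IsPred e a b ∧ (e a).1 = true) ∨ (IsPred e b a ∧ (e b).1 = false) ∨
    (InclCond P e a b ∧ (e a).1 = false) ∨ (InclCond P e b a ∧ (e b).1 = true)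

/-- `{a, b}` is an edge of the graph `Σ(e)` (in some direction). -/
def UEdge {m : ℕ} (P : SimpleGraph V) (e : Fin m → Bool × V) (a b : Fin m) : Prop :=
  DirEdge P e a b ∨ DirEdge P e b a

/-- Adjacency in the doubled graph `P̃`. -/
def TAdj (P : SimpleGraph V) (p q : Bool × V) : Prop :=
  p.1 = q.1 ∧ P.Adj p.2 q.2

/-- The negative of a letter of `P̃`. -/
def negEnt (p : Bool × V) : Bool × V := (!p.1, p.2)

/-- The combinatorial data of a 2- or 3-move: the (consecutive) positions involved. -/
inductive MoveSpec (m : ℕ) where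
  | two (a b : Fin m)
  | three (a b c : Fin m)

/-- The position of a move (the last of the positions involved). -/
def MoveSpec.pos {m : ℕ} : MoveSpec m → Fin m
  | .two _ b => b
  | .three _ _ c => c

/-- `e'` is obtained from `e` by the 2- or 3-move described by `s`. -/
def IsMove {m : ℕ} (P : SimpleGraph V) (e e' : Fin m → Bool × V) : MoveSpec m → Prop
  | .two a b => (b : ℕ) = (a : ℕ) + 1 ∧ ¬ TAdj P (e a) (e b) ∧
      e' a = e b ∧ e' b = e a ∧ ∀ l, l ≠ a → l ≠ b → e' l = e l
  | .three a b c => (b : ℕ) = (a : ℕ) + 1 ∧ (c : ℕ) = (b : ℕ) + 1 ∧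
      e c = e a ∧ TAdj P (e b) (e c) ∧
      e' a = e b ∧ e' b = e a ∧ e' c = e b ∧ ∀ l, l ≠ a → l ≠ b → l ≠ c → e' l = e l

/-- A move is trivial if it is a 2-move interchanging entries which are not opposite. -/
def MoveTrivial {m : ℕ} (e : Fin m → Bool × V) : MoveSpec m → Prop
  | .two a b => e b ≠ negEnt (e a)
  | .three _ _ _ => False

/-- The permutation `σ` associated with a move. -/
noncomputable def moveSigma {m : ℕ} (e : Fin m → Bool × V) : MoveSpec m → Equiv.Perm (Fin m)
  | .two a b => if e b = negEnt (e a) then 1 else Equiv.swap a b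
  | .three a b _ => Equiv.swap a b

/-- The skew-symmetric form `Ω` of the graph `Σ(e)`, over a commutative ring `R`. -/
noncomputable def omegaForm (R : Type*) [CommRing R] {m : ℕ} (P : SimpleGraph V)
    (e : Fin m → Bool × V) (x y : Fin m → R) : R :=
  ∑ a : Fin m, ∑ b : Fin m, if DirEdge P e a b then x a * y b - x b * y a else 0

/-- The symplectic transvection `τ_k` of the graph `Σ(e)`, over `R`. -/
noncomputable def transv (R : Type*) [CommRing R] {m : ℕ} (P : SimpleGraph V)
    (e : Fin m → Bool × V) (k : Fin m) (x : Fin m → R) : Fin m → R :=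
  x - omegaForm R P e x (Pi.single k 1) • (Pi.single k 1 : Fin m → R)

/-- The group `Γ_e ⊆ GL_m(ℤ)` generated by the transvections `τ_k`, `k ∈ B(e)`. -/
noncomputable def Gamma {m : ℕ} (P : SimpleGraph V) (e : Fin m → Bool × V) :
    Subgroup ((Fin m → ℤ) ≃ₗ[ℤ] (Fin m → ℤ)) :=
  Subgroup.closure {g | ∃ k, BoundedIdx e k ∧ ⇑g = transv ℤ P e k}

/-- The group `Γ_e(F₂)` of linear transformations of `F₂^m` generated by the reductions
modulo 2 of the transvections `τ_k`, `k ∈ B(e)`. -/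
noncomputable def GammaF2 {m : ℕ} (P : SimpleGraph V) (e : Fin m → Bool × V) :
    Subgroup (Equiv.Perm (Fin m → ZMod 2)) :=
  Subgroup.closure {g | ∃ k, BoundedIdx e k ∧ ⇑g = transv (ZMod 2) P e k}

/-- The map `φ⁺` associated with a move. -/
noncomputable def phiP {m : ℕ} (P : SimpleGraph V) (e : Fin m → Bool × V) (s : MoveSpec m)
    (x : Fin m → ℤ) : Fin m → ℤ := fun l =>
  if l = s.pos ∧ ¬ MoveTrivial e s then
    (∑ a : Fin m, if DirEdge P e a s.pos then x a else 0) - x s.pos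
  else x (moveSigma e s l)

/-- The map `φ⁻` associated with a move. -/
noncomputable def phiM {m : ℕ} (P : SimpleGraph V) (e : Fin m → Bool × V) (s : MoveSpec m)
    (x : Fin m → ℤ) : Fin m → ℤ := fun l =>
  if l = s.pos ∧ ¬ MoveTrivial e s then
    (∑ b : Fin m, if DirEdge P e s.pos b then x b else 0) - x s.pos
  else x (moveSigma e s l)



section AuxProof

set_option linter.unusedSectionVars false

variable {V : Type*} [DecidableEq V]

lemma negEnt_negEnt (p : Bool × V) : negEnt (negEnt p) = p := by simp [negEnt]

lemma neg_flip {p q : Bool × V} : p = negEnt q ↔ q = negEnt p := by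
  constructor <;> (rintro rfl; rw [negEnt_negEnt])

lemma dirEdge_irrefl {m : ℕ} {P : SimpleGraph V} {e : Fin m → Bool × V} {a : Fin m} :
    ¬ DirEdge P e a a := by
  rintro (⟨h, -⟩ | ⟨h, -⟩ | ⟨h, -⟩ | ⟨h, -⟩) <;> exact absurd h.1 (lt_irrefl a)

lemma pred_congr {m : ℕ} {f g : Fin m → Bool × V} (hsnd : ∀ l, (g l).2 = (f l).2) :
    ∀ k l, IsPred g k l ↔ IsPred f k l := by
  intro k l; unfold IsPred; simp only [hsnd]

lemma two_pred {m : ℕ} {f : Fin m → Bool × V} {a b : Fin m} (hb : (b : ℕ) = (a : ℕ) + 1)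
    (hneg : f b = negEnt (f a)) : ∀ k, IsPred f k b ↔ k = a := by
  intro k
  constructor
  · rintro ⟨hkb, hk2, hno⟩
    by_contra hne
    exact hno a (by omega) (by omega) (by rw [hneg]; rfl)
  · rintro rfl
    exact ⟨by omega, by rw [hneg]; rfl, fun j h1 h2 => by omega⟩

lemma two_not_incl {m : ℕ} (P : SimpleGraph V) {f : Fin m → Bool × V} {a b : Fin m}
    (hb : (b : ℕ) = (a : ℕ) + 1) (hneg : f b = negEnt (f a)) :
    ∀ x, ¬ InclCond P f x b := by
  rintro x ⟨hxb, hAdj, hor⟩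
  by_cases hxa : x = a
  · subst hxa; rw [hneg] at hAdj; exact P.irrefl hAdj
  · have hx : (x : ℕ) < (a : ℕ) := by omega
    rcases hor with ⟨p, hp, hpx, -, -⟩ | ⟨q, hq, hall, -⟩
    · have := (two_pred hb hneg p).mp hp
      subst this; have := hpx; omega
    · have h1 := hall a ((two_pred hb hneg a).mpr rfl)
      have h2 := hq.1; omega

lemma two_incl {m : ℕ} (P : SimpleGraph V) {f : Fin m → Bool × V} {a b : Fin m}
    (hb : (b : ℕ) = (a : ℕ) + 1) (hneg : f b = negEnt (f a)) :
    ∀ y, InclCond P f b y ↔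
      (b < y ∧ P.Adj (f b).2 (f y).2 ∧ ∀ p, IsPred f p y → p < a) := by
  intro y
  constructor
  · rintro ⟨hby, hAdj, hor⟩
    refine ⟨hby, hAdj, ?_⟩
    rcases hor with ⟨p, hpy, hpb, hall, -⟩ | ⟨q, hqb, hall, -⟩
    · have h1 := hall a ((two_pred hb hneg a).mpr rfl)
      have h2 := hpb; omega
    · have := (two_pred hb hneg q).mp hqb
      subst this; exact hall
  · rintro ⟨hby, hAdj, hall⟩
    refine ⟨hby, hAdj, Or.inr ⟨a, (two_pred hb hneg a).mpr rfl, hall, ?_⟩⟩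
    rw [hneg]; simp [negEnt]

lemma key_two {m : ℕ} (P : SimpleGraph V) {e e' : Fin m → Bool × V} {a b : Fin m}
    (hb : (b : ℕ) = (a : ℕ) + 1)
    (h'a : e' a = e b) (h'b : e' b = e a)
    (hrest : ∀ l, l ≠ a → l ≠ b → e' l = e l)
    (hneg : e b = negEnt (e a)) :
    ∀ x, DirEdge P e x b ↔ DirEdge P e' b x := by
  have hneg' : e' b = negEnt (e' a) := by rw [h'a, h'b, hneg, negEnt_negEnt]
  have hsnd : ∀ l, (e' l).2 = (e l).2 := by
    intro l
    by_cases h1 : l = a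
    · subst h1; rw [h'a, hneg]; rfl
    by_cases h2 : l = b
    · subst h2; rw [h'b, hneg]; rfl
    · rw [hrest l h1 h2]
  have hpred := pred_congr hsnd
  have hb1 : (e b).1 = !(e a).1 := by rw [hneg]; rfl
  have h'b1 : (e' b).1 = (e a).1 := by rw [h'b]
  have h'a1 : (e' a).1 = !(e a).1 := by rw [h'a, hb1]
  intro x
  constructor
  · rintro (⟨h1, h2⟩ | ⟨h1, h2⟩ | ⟨h1, h2⟩ | ⟨h1, h2⟩)
    · have hxa := (two_pred hb hneg x).mp h1
      subst hxa
      refine Or.inr (Or.inl ⟨(two_pred hb hneg' x).mpr rfl, ?_⟩)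
      rw [h'a1, h2]; rfl
    · rw [hb1] at h2; simp only [Bool.not_eq_false'] at h2
      exact Or.inl ⟨(hpred b x).mpr h1, by rw [h'b1, h2]⟩
    · exact absurd h1 (two_not_incl P hb hneg x)
    · rw [hb1] at h2; simp only [Bool.not_eq_true'] at h2
      obtain ⟨hbx, hAdj, hall⟩ := (two_incl P hb hneg x).mp h1
      refine Or.inr (Or.inr (Or.inl ⟨(two_incl P hb hneg' x).mpr
        ⟨hbx, by rw [hsnd, hsnd]; exact hAdj, fun p hp => hall p ((hpred p x).mp hp)⟩, ?_⟩))
      rw [h'b1, h2]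
  · rintro (⟨h1, h2⟩ | ⟨h1, h2⟩ | ⟨h1, h2⟩ | ⟨h1, h2⟩)
    · rw [h'b1] at h2
      refine Or.inr (Or.inl ⟨(hpred b x).mp h1, ?_⟩)
      rw [hb1, h2]; rfl
    · have hxa := (two_pred hb hneg' x).mp h1
      subst hxa
      rw [h'a1] at h2; simp only [Bool.not_eq_false'] at h2
      exact Or.inl ⟨(two_pred hb hneg x).mpr rfl, h2⟩
    · rw [h'b1] at h2
      obtain ⟨hbx, hAdj, hall⟩ := (two_incl P hb hneg' x).mp h1
      refine Or.inr (Or.inr (Or.inr ⟨(two_incl P hb hneg x).mpr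
        ⟨hbx, by rw [← hsnd, ← hsnd]; exact hAdj, fun p hp => hall p ((hpred p x).mpr hp)⟩, ?_⟩))
      rw [hb1, h2]; rfl
    · exact absurd h1 (two_not_incl P hb hneg' x)

lemma three_pred {m : ℕ} {P : SimpleGraph V} {f : Fin m → Bool × V} {a b c : Fin m}
    (hb : (b : ℕ) = (a : ℕ) + 1) (hc : (c : ℕ) = (b : ℕ) + 1)
    (hfc : f c = f a) (hadj : P.Adj (f b).2 (f c).2) :
    ∀ k, IsPred f k c ↔ k = a := by
  have hfb2 : (f b).2 ≠ (f a).2 := by rw [← hfc]; exact hadj.ne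
  intro k
  constructor
  · rintro ⟨hkc, hk2, hno⟩
    by_cases hkb : k = b
    · subst hkb
      rw [hfc] at hk2
      exact absurd hk2 hfb2
    by_cases hka : k = a
    · exact hka
    · exact absurd (show (f a).2 = (f c).2 by rw [hfc]) (hno a (by omega) (by omega))
  · rintro rfl
    refine ⟨by omega, hfc.symm ▸ rfl, fun j h1 h2 hj => ?_⟩
    have hjb : j = b := by omega
    subst hjb
    rw [hfc] at hj
    exact hfb2 hj

lemma three_incl_left {m : ℕ} {P : SimpleGraph V} {f : Fin m → Bool × V} {a b c : Fin m}
    (hb : (b : ℕ) = (a : ℕ) + 1) (hc : (c : ℕ) = (b : ℕ) + 1)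
    (hfc : f c = f a) (hadj : P.Adj (f b).2 (f c).2) (hsgn : (f b).1 = (f c).1) :
    ∀ x, InclCond P f x c ↔ x = b := by
  have hfb2 : (f b).2 ≠ (f a).2 := by rw [← hfc]; exact hadj.ne
  intro x
  constructor
  · rintro ⟨hxc, hAdj, hor⟩
    by_cases hxb : x = b
    · exact hxb
    by_cases hxa : x = a
    · subst hxa
      rw [hfc] at hAdj
      exact absurd hAdj P.irrefl
    · have hx : (x : ℕ) < (a : ℕ) := by omega
      rcases hor with ⟨p, hp, hpx, -, -⟩ | ⟨q, hq, hall, -⟩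
      · have := (three_pred hb hc hfc hadj p).mp hp
        subst this; have := hpx; omega
      · have h1 := hall a ((three_pred hb hc hfc hadj a).mpr rfl)
        have h2 := hq.1; omega
  · rintro rfl
    refine ⟨by omega, hadj, Or.inl ⟨a, (three_pred hb hc hfc hadj a).mpr rfl, by omega,
      fun q hq => ?_, by rw [hfc] at hsgn; exact hsgn.symm⟩⟩
    by_cases hqa : q = a
    · subst hqa; exact absurd hq.2.1.symm hfb2
    · have := hq.1; omega

lemma three_incl_right {m : ℕ} {P : SimpleGraph V} {f : Fin m → Bool × V} {a b c : Fin m}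
    (hb : (b : ℕ) = (a : ℕ) + 1) (hc : (c : ℕ) = (b : ℕ) + 1)
    (hfc : f c = f a) (hadj : P.Adj (f b).2 (f c).2) (hsgn : (f b).1 = (f c).1) :
    ∀ y, InclCond P f c y ↔ IsPred f b y := by
  have hfb2 : (f b).2 ≠ (f a).2 := by rw [← hfc]; exact hadj.ne
  intro y
  constructor
  · rintro ⟨hcy, hAdj, hor⟩
    rcases hor with ⟨p, hpy, hpc, hall, -⟩ | ⟨q, hqc, -, hsq⟩
    · have h1 := hall a ((three_pred hb hc hfc hadj a).mpr rfl)
      have h2 := hpc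
      have hpb : p = b := by omega
      subst hpb; exact hpy
    · have := (three_pred hb hc hfc hadj q).mp hqc
      subst this
      rw [hfc] at hsq
      exact absurd hsq (by simp)
  · intro h
    have hby := h.1
    have hyc : y ≠ c := by
      intro hyc; subst hyc
      have h21 := h.2.1
      rw [hfc] at h21
      exact hfb2 h21
    refine ⟨by omega, by rw [← h.2.1]; exact hadj.symm, Or.inl ⟨b, h, by omega,
      fun q hq => ?_, hsgn⟩⟩
    have := (three_pred hb hc hfc hadj q).mp hq
    subst this; omega

lemma three_pred_cross {m : ℕ} {f g : Fin m → Bool × V} {a b c : Fin m}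
    (hb : (b : ℕ) = (a : ℕ) + 1) (hc : (c : ℕ) = (b : ℕ) + 1)
    (hgb2 : (g b).2 = (f c).2) (hgc2 : (g c).2 ≠ (f c).2)
    (hrest : ∀ l, l ≠ a → l ≠ b → l ≠ c → g l = f l) :
    ∀ y : Fin m, (c : ℕ) < (y : ℕ) → (IsPred f c y ↔ IsPred g b y) := by
  intro y hy
  have hgy : g y = f y := hrest y (by omega) (by omega) (by omega)
  constructor
  · rintro ⟨hcy, h2, h3⟩
    refine ⟨by omega, by rw [hgb2, hgy]; exact h2, fun j h1j h2j => ?_⟩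
    rw [hgy]
    by_cases hjc : j = c
    · subst hjc; rw [← h2]; exact hgc2
    · have hj : g j = f j := hrest j (by omega) (by omega) hjc
      rw [hj]
      exact h3 j (by omega) h2j
  · rintro ⟨hby, h2, h3⟩
    rw [hgy, hgb2] at h2
    refine ⟨by omega, h2, fun j h1j h2j => ?_⟩
    have hj : g j = f j := hrest j (by omega) (by omega) (by omega)
    have := h3 j (by omega) h2j
    rw [hgy, hj] at this
    exact this

lemma key_three {m : ℕ} (P : SimpleGraph V) {e e' : Fin m → Bool × V} {a b c : Fin m}
    (hb : (b : ℕ) = (a : ℕ) + 1) (hc : (c : ℕ) = (b : ℕ) + 1)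
    (hca : e c = e a) (htadj : TAdj P (e b) (e c))
    (h'a : e' a = e b) (h'b : e' b = e a) (h'c : e' c = e b)
    (hrest : ∀ l, l ≠ a → l ≠ b → l ≠ c → e' l = e l) :
    ∀ x, DirEdge P e x c ↔ DirEdge P e' c (Equiv.swap a b x) := by
  obtain ⟨hsgnbc, hadj⟩ := htadj
  have h'ca : e' c = e' a := by rw [h'c, h'a]
  have h'adj : P.Adj (e' b).2 (e' c).2 := by
    rw [h'b, h'c, ← hca]; exact hadj.symm
  have h'sgn : (e' b).1 = (e' c).1 := by
    rw [h'b, h'c, ← hca]; exact hsgnbc.symm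
  have Pe := three_pred hb hc hca hadj
  have Pe' := three_pred hb hc h'ca h'adj
  have Ie := three_incl_left hb hc hca hadj hsgnbc
  have Ie' := three_incl_left hb hc h'ca h'adj h'sgn
  have Re := three_incl_right hb hc hca hadj hsgnbc
  have Re' := three_incl_right hb hc h'ca h'adj h'sgn
  have X1 : ∀ y : Fin m, (c : ℕ) < (y : ℕ) → (IsPred e c y ↔ IsPred e' b y) := by
    apply three_pred_cross hb hc
    · rw [h'b, hca]
    · rw [h'c, hca]; have hne := hadj.ne; rw [hca] at hne; exact hne
    · exact hrest
  have X2 : ∀ y : Fin m, (c : ℕ) < (y : ℕ) → (IsPred e' c y ↔ IsPred e b y) := by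
    apply three_pred_cross hb hc
    · rw [h'c]
    · rw [h'c]; exact hadj.ne'
    · exact fun l h1 h2 h3 => (hrest l h1 h2 h3).symm
  have sa : (e a).1 = (e c).1 := by rw [← hca]
  have sb : (e b).1 = (e c).1 := hsgnbc
  have s'a : (e' a).1 = (e c).1 := by rw [h'a]; exact hsgnbc
  have s'b : (e' b).1 = (e c).1 := by rw [h'b]; exact sa
  have s'c : (e' c).1 = (e c).1 := by rw [h'c]; exact hsgnbc
  intro x
  by_cases hxa : x = a
  · subst hxa
    rw [Equiv.swap_apply_left]
    constructor
    · rintro (⟨h1, h2⟩ | ⟨h1, h2⟩ | ⟨h1, h2⟩ | ⟨h1, h2⟩)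
      · exact Or.inr (Or.inr (Or.inr ⟨(Ie' b).mpr rfl, by rw [s'b, ← sa]; exact h2⟩))
      · have := h1.1; omega
      · have := (Ie x).mp h1; omega
      · have := ((Re x).mp h1).1; omega
    · rintro (⟨h1, h2⟩ | ⟨h1, h2⟩ | ⟨h1, h2⟩ | ⟨h1, h2⟩)
      · have := h1.1; omega
      · have := (Pe' b).mp h1; omega
      · have := ((Re' b).mp h1).1; omega
      · exact Or.inl ⟨(Pe x).mpr rfl, by rw [sa, ← s'b]; exact h2⟩
  by_cases hxb : x = b
  · subst hxb
    rw [Equiv.swap_apply_right]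
    constructor
    · rintro (⟨h1, h2⟩ | ⟨h1, h2⟩ | ⟨h1, h2⟩ | ⟨h1, h2⟩)
      · have := (Pe x).mp h1; omega
      · have := h1.1; omega
      · exact Or.inr (Or.inl ⟨(Pe' a).mpr rfl, by rw [s'a, ← sb]; exact h2⟩)
      · have := ((Re x).mp h1).1; omega
    · rintro (⟨h1, h2⟩ | ⟨h1, h2⟩ | ⟨h1, h2⟩ | ⟨h1, h2⟩)
      · have := h1.1; omega
      · exact Or.inr (Or.inr (Or.inl ⟨(Ie x).mpr rfl, by rw [sb, ← s'a]; exact h2⟩))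
      · have := ((Re' a).mp h1).1; omega
      · have := (Ie' a).mp h1; omega
  by_cases hxc : x = c
  · subst hxc
    rw [Equiv.swap_apply_of_ne_of_ne hxa hxb]
    constructor
    · rintro (⟨h1, h2⟩ | ⟨h1, h2⟩ | ⟨h1, h2⟩ | ⟨h1, h2⟩)
      · have := (Pe x).mp h1; omega
      · have := h1.1; omega
      · have := (Ie x).mp h1; omega
      · have := (Pe b).mp ((Re x).mp h1); omega
    · rintro (⟨h1, h2⟩ | ⟨h1, h2⟩ | ⟨h1, h2⟩ | ⟨h1, h2⟩)
      · have := h1.1; omega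
      · have := (Pe' x).mp h1; omega
      · have := (Pe' b).mp ((Re' x).mp h1); omega
      · have := (Ie' x).mp h1; omega
  · rw [Equiv.swap_apply_of_ne_of_ne hxa hxb]
    by_cases hlt : (x : ℕ) < (c : ℕ)
    · constructor
      · rintro (⟨h1, h2⟩ | ⟨h1, h2⟩ | ⟨h1, h2⟩ | ⟨h1, h2⟩)
        · exact absurd ((Pe x).mp h1) hxa
        · have := h1.1; omega
        · exact absurd ((Ie x).mp h1) hxb
        · have := ((Re x).mp h1).1; omega
      · rintro (⟨h1, h2⟩ | ⟨h1, h2⟩ | ⟨h1, h2⟩ | ⟨h1, h2⟩)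
        · have := h1.1; omega
        · exact absurd ((Pe' x).mp h1) hxa
        · have := ((Re' x).mp h1).1; omega
        · exact absurd ((Ie' x).mp h1) hxb
    · have hgt : (c : ℕ) < (x : ℕ) := by omega
      constructor
      · rintro (⟨h1, h2⟩ | ⟨h1, h2⟩ | ⟨h1, h2⟩ | ⟨h1, h2⟩)
        · exact absurd ((Pe x).mp h1) hxa
        · exact Or.inr (Or.inr (Or.inl ⟨(Re' x).mpr ((X1 x hgt).mp h1),
            by rw [s'c]; exact h2⟩))
        · exact absurd ((Ie x).mp h1) hxb
        · exact Or.inl ⟨(X2 x hgt).mpr ((Re x).mp h1), by rw [s'c]; exact h2⟩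
      · rintro (⟨h1, h2⟩ | ⟨h1, h2⟩ | ⟨h1, h2⟩ | ⟨h1, h2⟩)
        · rw [s'c] at h2
          exact Or.inr (Or.inr (Or.inr ⟨(Re x).mpr ((X2 x hgt).mp h1), h2⟩))
        · exact absurd ((Pe' x).mp h1) hxa
        · rw [s'c] at h2
          exact Or.inr (Or.inl ⟨(X1 x hgt).mpr ((Re' x).mp h1), h2⟩)
        · exact absurd ((Ie' x).mp h1) hxb

lemma tadj_symm {P : SimpleGraph V} {p q : Bool × V} (h : TAdj P p q) : TAdj P q p :=
  ⟨h.1.symm, h.2.symm⟩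

lemma move_symm {m : ℕ} {P : SimpleGraph V} {e e' : Fin m → Bool × V} {s : MoveSpec m}
    (hmv : IsMove P e e' s) : IsMove P e' e s := by
  cases s with
  | two a b =>
    obtain ⟨hb, hnt, h'a, h'b, hrest⟩ := hmv
    refine ⟨hb, ?_, h'b.symm, h'a.symm, fun l h1 h2 => (hrest l h1 h2).symm⟩
    rw [h'a, h'b]
    exact fun h => hnt (tadj_symm h)
  | three a b c =>
    obtain ⟨hb, hc, hca, htadj, h'a, h'b, h'c, hrest⟩ := hmv
    refine ⟨hb, hc, by rw [h'c, h'a], ?_, h'b.symm, h'a.symm, hca.trans h'b.symm,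
      fun l h1 h2 h3 => (hrest l h1 h2 h3).symm⟩
    rw [h'b, h'c]
    exact ⟨by rw [← hca]; exact htadj.1.symm, by rw [← hca]; exact htadj.2.symm⟩

lemma mt_congr {m : ℕ} {P : SimpleGraph V} {e e' : Fin m → Bool × V} {s : MoveSpec m}
    (hmv : IsMove P e e' s) : MoveTrivial e' s ↔ MoveTrivial e s := by
  cases s with
  | two a b =>
    obtain ⟨hb, -, h'a, h'b, -⟩ := hmv
    show e' b ≠ negEnt (e' a) ↔ e b ≠ negEnt (e a)
    rw [h'a, h'b]
    exact not_congr neg_flip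
  | three a b c => exact Iff.rfl

lemma ms_congr {m : ℕ} {P : SimpleGraph V} {e e' : Fin m → Bool × V} {s : MoveSpec m}
    (hmv : IsMove P e e' s) : moveSigma e' s = moveSigma e s := by
  cases s with
  | two a b =>
    obtain ⟨hb, -, h'a, h'b, -⟩ := hmv
    simp only [moveSigma]
    rw [h'a, h'b]
    by_cases h : e b = negEnt (e a)
    · rw [if_pos (neg_flip.mpr h), if_pos h]
    · rw [if_neg (fun hh => h (neg_flip.mp hh)), if_neg h]
  | three a b c => rfl

lemma ms_invol {m : ℕ} (e : Fin m → Bool × V) (s : MoveSpec m) :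
    ∀ l, moveSigma e s (moveSigma e s l) = l := by
  cases s with
  | two a b =>
    intro l
    simp only [moveSigma]
    by_cases h : e b = negEnt (e a)
    · rw [if_pos h]; rfl
    · rw [if_neg h]; exact Equiv.swap_apply_self _ _ _
  | three a b c =>
    intro l
    exact Equiv.swap_apply_self _ _ _

lemma ms_fix {m : ℕ} {P : SimpleGraph V} {e e' : Fin m → Bool × V} {s : MoveSpec m}
    (hmv : IsMove P e e' s) (hT : ¬ MoveTrivial e s) : moveSigma e s s.pos = s.pos := by
  cases s with
  | two a b =>
    have hneg : e b = negEnt (e a) := not_not.mp hT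
    show moveSigma e (MoveSpec.two a b) b = b
    simp only [moveSigma]
    rw [if_pos hneg]
    rfl
  | three a b c =>
    obtain ⟨hb, hc, -⟩ := hmv
    show Equiv.swap a b c = c
    exact Equiv.swap_apply_of_ne_of_ne (by omega) (by omega)

lemma phiP_pos {m : ℕ} {P : SimpleGraph V} {e : Fin m → Bool × V} {s : MoveSpec m}
    (hT : ¬ MoveTrivial e s) (x : Fin m → ℤ) :
    phiP P e s x s.pos = (∑ a : Fin m, if DirEdge P e a s.pos then x a else 0) - x s.pos := by
  unfold phiP; rw [if_pos ⟨rfl, hT⟩]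

lemma phiP_ne {m : ℕ} {P : SimpleGraph V} {e : Fin m → Bool × V} {s : MoveSpec m} {l : Fin m}
    (h : ¬ (l = s.pos ∧ ¬ MoveTrivial e s)) (x : Fin m → ℤ) :
    phiP P e s x l = x (moveSigma e s l) := by
  unfold phiP; rw [if_neg h]

lemma phiM_pos {m : ℕ} {P : SimpleGraph V} {e : Fin m → Bool × V} {s : MoveSpec m}
    (hT : ¬ MoveTrivial e s) (x : Fin m → ℤ) :
    phiM P e s x s.pos = (∑ b : Fin m, if DirEdge P e s.pos b then x b else 0) - x s.pos := by
  unfold phiM; rw [if_pos ⟨rfl, hT⟩]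

lemma phiM_ne {m : ℕ} {P : SimpleGraph V} {e : Fin m → Bool × V} {s : MoveSpec m} {l : Fin m}
    (h : ¬ (l = s.pos ∧ ¬ MoveTrivial e s)) (x : Fin m → ℤ) :
    phiM P e s x l = x (moveSigma e s l) := by
  unfold phiM; rw [if_neg h]

lemma key_of_move {m : ℕ} {P : SimpleGraph V} {e e' : Fin m → Bool × V} {s : MoveSpec m}
    (hmv : IsMove P e e' s) (hT : ¬ MoveTrivial e s) :
    ∀ y, DirEdge P e y s.pos ↔ DirEdge P e' s.pos (moveSigma e s y) := by
  cases s with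
  | two a b =>
    obtain ⟨hb, -, h'a, h'b, hrest⟩ := hmv
    have hneg : e b = negEnt (e a) := not_not.mp hT
    intro y
    have hσ : moveSigma e (MoveSpec.two a b) = 1 := by simp only [moveSigma]; rw [if_pos hneg]
    rw [hσ]
    exact key_two P hb h'a h'b hrest hneg y
  | three a b c =>
    obtain ⟨hb, hc, hca, htadj, h'a, h'b, h'c, hrest⟩ := hmv
    intro y
    exact key_three P hb hc hca htadj h'a h'b h'c hrest y

lemma comp_MP {m : ℕ} (P : SimpleGraph V) {e e' : Fin m → Bool × V} {s : MoveSpec m}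
    (hmv : IsMove P e e' s) : phiM P e' s ∘ phiP P e s = id := by
  have htr := mt_congr hmv
  have hσeq := ms_congr hmv
  have hσ2 := ms_invol e s
  funext x l
  simp only [Function.comp_apply, id_eq]
  by_cases hT : MoveTrivial e s
  · rw [phiM_ne (fun h => h.2 (htr.mpr hT)), hσeq, phiP_ne (fun h => h.2 hT), hσ2]
  · by_cases hl : l = s.pos
    · subst hl
      have hT' : ¬ MoveTrivial e' s := fun h => hT (htr.mp h)
      have hkey := key_of_move hmv hT
      rw [phiM_pos hT', phiP_pos hT]
      have hsum : (∑ y : Fin m, if DirEdge P e' s.pos y then phiP P e s x y else 0)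
          = ∑ y : Fin m, if DirEdge P e y s.pos then x y else 0 := by
        rw [← Equiv.sum_comp (moveSigma e s)
          (fun y => if DirEdge P e' s.pos y then phiP P e s x y else 0)]
        refine Finset.sum_congr rfl fun y _ => ?_
        by_cases hdy : DirEdge P e y s.pos
        · have hdy' := (hkey y).mp hdy
          simp only [if_pos hdy', if_pos hdy]
          rw [phiP_ne, hσ2]
          rintro ⟨hp, -⟩
          rw [hp] at hdy'
          exact dirEdge_irrefl hdy'
        · simp only [if_neg (fun hd => hdy ((hkey y).mpr hd)), if_neg hdy]
      rw [hsum]; ring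
    · have hl' : moveSigma e s l ≠ s.pos := by
        intro h
        apply hl
        rw [← hσ2 l, h, ms_fix hmv hT]
      rw [phiM_ne (fun h => hl h.1), hσeq, phiP_ne (fun h => hl' h.1), hσ2]

lemma comp_PM {m : ℕ} (P : SimpleGraph V) {e e' : Fin m → Bool × V} {s : MoveSpec m}
    (hmv : IsMove P e e' s) : phiP P e' s ∘ phiM P e s = id := by
  have hmv' := move_symm hmv
  have htr := mt_congr hmv
  have hσeq := ms_congr hmv
  have hσ2 := ms_invol e s
  funext x l
  simp only [Function.comp_apply, id_eq]
  by_cases hT : MoveTrivial e s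
  · rw [phiP_ne (fun h => h.2 (htr.mpr hT)), hσeq, phiM_ne (fun h => h.2 hT), hσ2]
  · by_cases hl : l = s.pos
    · subst hl
      have hT' : ¬ MoveTrivial e' s := fun h => hT (htr.mp h)
      have hkey0 := key_of_move hmv' hT'
      have hkey : ∀ y, DirEdge P e s.pos y ↔ DirEdge P e' (moveSigma e s y) s.pos := by
        intro y
        have h0 := hkey0 (moveSigma e s y)
        rw [hσeq, hσ2] at h0
        exact h0.symm
      rw [phiP_pos hT', phiM_pos hT]
      have hsum : (∑ y : Fin m, if DirEdge P e' y s.pos then phiM P e s x y else 0)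
          = ∑ y : Fin m, if DirEdge P e s.pos y then x y else 0 := by
        rw [← Equiv.sum_comp (moveSigma e s)
          (fun y => if DirEdge P e' y s.pos then phiM P e s x y else 0)]
        refine Finset.sum_congr rfl fun y _ => ?_
        by_cases hdy : DirEdge P e s.pos y
        · have hdy' := (hkey y).mp hdy
          simp only [if_pos hdy', if_pos hdy]
          rw [phiM_ne, hσ2]
          rintro ⟨hp, -⟩
          rw [hp] at hdy'
          exact dirEdge_irrefl hdy'
        · simp only [if_neg (fun hd => hdy ((hkey y).mpr hd)), if_neg hdy]
      rw [hsum]; ring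
    · have hl' : moveSigma e s l ≠ s.pos := by
        intro h
        apply hl
        rw [← hσ2 l, h, ms_fix hmv hT]
      rw [phiP_ne (fun h => hl h.1), hσeq, phiM_ne (fun h => hl' h.1), hσ2]

end AuxProof

variable {V : Type*} [DecidableEq V] [Fintype V] {W : Type*} [Group W]

/-- Theorem 3.8 (a): `φ⁻_{i,i'} ∘ φ⁺_{i',i} = Id` and `φ⁺_{i,i'} ∘ φ⁻_{i',i} = Id`. -/
theorem phi_inverses (P : SimpleGraph V) (cs : CoxeterSystem (coxeterMatrix P) W)
    (u v : W) {m : ℕ} (hm : m = cs.length u + cs.length v)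
    (e e' : Fin m → Bool × V) (he : IsRWordPair P cs u v e) (he' : IsRWordPair P cs u v e')
    (s : MoveSpec m) (hmv : IsMove P e e' s) :
    phiM P e' s ∘ phiP P e s = id ∧ phiP P e' s ∘ phiM P e s = id := by
  exact ⟨comp_MP P hmv, comp_PM P hmv⟩

end SLC
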